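/- Let E¹ be the meet-semilattice with elements ⊥, ⊤ and p_i (i ∈ ℕ), ordered by ⊥ ≤ p_i ≤ ⊤ for all i with the p_i pairwise incomparable (so p_i ⊓ p_j = ⊥ for i ≠ j, and ⊤ is a greatest element). Then the character η of E¹ defined by η ⊤ = true and η e = false for all e ≠ ⊤ is a tight character (it lies in the closure of the set of ultracharacters) but is not an ultracharacter; in particular Ê¹_∞ is a proper subset of Ê¹_tight. -/
import Mathlib


/-- The semilattice `E¹` with elements `⊥`, `⊤` and `p_i` (`i ∈ ℕ`). -/
inductive E1 where
  | bot : E1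
  | top : E1
  | p : ℕ → E1
deriving DecidableEq

/-- The meet of `E¹`: `⊤` is a unit for `⊓`, `p i ⊓ p i = p i`,
`p i ⊓ p j = ⊥` for `i ≠ j`, and `⊥` is absorbing. -/
def einf1 : E1 → E1 → E1
  | E1.top, x => x
  | x, E1.top => x
  | E1.p i, E1.p j => if i = j then E1.p i else E1.bot
  | _, _ => E1.bot

/-- A character of `E¹`. -/
def IsCharE1 (ξ : E1 → Bool) : Prop :=
  (∀ e f, ξ (einf1 e f) = (ξ e && ξ f)) ∧ ξ E1.bot = false ∧ ∃ e, ξ e = true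

/-- An ultracharacter of `E¹`: a character maximal in the pointwise order. -/
def IsUltraE1 (ξ : E1 → Bool) : Prop :=
  IsCharE1 ξ ∧ ∀ η : E1 → Bool, IsCharE1 η →
    (∀ e, ξ e = true → η e = true) → η = ξ

/-- The character `η` taking value `true` exactly at `⊤`. -/
def etaTop : E1 → Bool := fun e => decide (e = E1.top)

/-- The ultracharacter supported at `⊤` and `p i`. -/
def xiP (i : ℕ) : E1 → Bool := fun e => decide (e = E1.top ∨ e = E1.p i)

lemma xiP_char (i : ℕ) : IsCharE1 (xiP i) := by
  refine ⟨?_, by simp [xiP], ⟨E1.top, by simp [xiP]⟩⟩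
  intro e f
  rcases e with _ | _ | j <;> rcases f with _ | _ | k <;>
    simp [einf1, xiP]
  by_cases h : j = k
  · subst h; simp
  · simp [h]
    rintro rfl rfl; exact h rfl

lemma xiP_ultra (i : ℕ) : IsUltraE1 (xiP i) := by
  refine ⟨xiP_char i, ?_⟩
  intro η ⟨hmul, hbot, _⟩ hle
  have htop : η E1.top = true := hle _ (by simp [xiP])
  have hpi : η (E1.p i) = true := hle _ (by simp [xiP])
  funext e
  rcases e with _ | _ | j
  · simp [xiP, hbot]
  · simp [xiP, htop]
  · by_cases h : j = i
    · subst h; simp [xiP, hpi]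
    · have := hmul (E1.p j) (E1.p i)
      simp [einf1, h, hbot, hpi] at this
      simp [xiP, h, this]

lemma char_etaTop : IsCharE1 etaTop := by
  refine ⟨?_, by simp [etaTop], ⟨E1.top, by simp [etaTop]⟩⟩
  intro e f
  rcases e with _ | _ | j <;> rcases f with _ | _ | k <;> simp [einf1, etaTop]
  by_cases h : j = k <;> simp [h]

lemma etaTop_closure : etaTop ∈ closure {ξ : E1 → Bool | IsUltraE1 ξ} := by
  have htend : Filter.Tendsto (fun n => xiP n) Filter.atTop (nhds etaTop) := by
    rw [tendsto_pi_nhds]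
    intro e
    rcases e with _ | _ | j
    · exact tendsto_const_nhds.congr' (by filter_upwards with n; simp [xiP, etaTop])
    · exact tendsto_const_nhds.congr' (by filter_upwards with n; simp [xiP, etaTop])
    · refine tendsto_const_nhds.congr' ?_
      filter_upwards [Filter.eventually_gt_atTop j] with n hn
      have : ¬ E1.p j = E1.p n := by simp; omega
      simp [xiP, etaTop, this]
  exact mem_closure_of_tendsto htend (by filter_upwards with n; exact xiP_ultra n)

/-- the character `η` of `E¹` supported at `⊤` is a tight character
(it lies in the closure of the ultracharacters) but not an ultracharacter; in
particular `Ê¹_∞ ⊊ Ê¹_tight`. -/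
theorem etaTop_tight_not_ultra :
    IsCharE1 etaTop ∧
    etaTop ∈ closure {ξ : E1 → Bool | IsUltraE1 ξ} ∧
    ¬ IsUltraE1 etaTop ∧
    {ξ : E1 → Bool | IsUltraE1 ξ} ⊂
      ({ξ : E1 → Bool | IsCharE1 ξ} ∩ closure {ξ : E1 → Bool | IsUltraE1 ξ}) := by
  have hnu : ¬ IsUltraE1 etaTop := by
    rintro ⟨-, hmax⟩
    have hle : ∀ e, etaTop e = true → xiP 0 e = true := by
      intro e he
      rcases e with _ | _ | j <;> simp_all [etaTop, xiP]
    have := congrFun (hmax (xiP 0) (xiP_char 0) hle) (E1.p 0)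
    simp [xiP, etaTop] at this
  refine ⟨char_etaTop, etaTop_closure, hnu, ?_, ?_⟩
  · intro ξ hξ
    exact ⟨hξ.1, subset_closure hξ⟩
  · intro h
    exact hnu (h ⟨char_etaTop, etaTop_closure⟩)
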